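/- Let κ > 0 and θ = √(cosh κ). Then for all complex x, y with Re x > 0 and Re y > 0, one has (θ + cosh x)(θ + cosh y) + (cosh κ − 1) cosh x cosh y + sinh κ · sinh x sinh y ≠ 0. -/

import Mathlib

private lemma aux_sinh_apply (z : ℂ) :
    Complex.sinh z = ((Real.sinh z.re * Real.cos z.im : ℝ) : ℂ) +
      ((Real.cosh z.re * Real.sin z.im : ℝ) : ℂ) * Complex.I := by
  have h : Complex.sinh ((z.re : ℂ) + (z.im : ℂ) * Complex.I) =
      ((Real.sinh z.re * Real.cos z.im : ℝ) : ℂ) +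
      ((Real.cosh z.re * Real.sin z.im : ℝ) : ℂ) * Complex.I := by
    rw [Complex.sinh_add, Complex.sinh_mul_I, Complex.cosh_mul_I, ← Complex.ofReal_sinh,
      ← Complex.ofReal_cosh, ← Complex.ofReal_sin, ← Complex.ofReal_cos]
    push_cast
    ring
  rwa [Complex.re_add_im] at h

private lemma aux_cosh_apply (z : ℂ) :
    Complex.cosh z = ((Real.cosh z.re * Real.cos z.im : ℝ) : ℂ) +
      ((Real.sinh z.re * Real.sin z.im : ℝ) : ℂ) * Complex.I := by
  have h : Complex.cosh ((z.re : ℂ) + (z.im : ℂ) * Complex.I) =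
      ((Real.cosh z.re * Real.cos z.im : ℝ) : ℂ) +
      ((Real.sinh z.re * Real.sin z.im : ℝ) : ℂ) * Complex.I := by
    rw [Complex.cosh_add, Complex.sinh_mul_I, Complex.cosh_mul_I, ← Complex.ofReal_sinh,
      ← Complex.ofReal_cosh, ← Complex.ofReal_sin, ← Complex.ofReal_cos]
    push_cast
    ring
  rwa [Complex.re_add_im] at h

private lemma aux_sinh_re (z : ℂ) : (Complex.sinh z).re = Real.sinh z.re * Real.cos z.im := by
  rw [aux_sinh_apply z]; simp only [Complex.add_re, Complex.add_im, Complex.ofReal_re, Complex.ofReal_im, Complex.mul_re, Complex.mul_im, Complex.I_re, Complex.I_im, mul_zero, mul_one, zero_mul, sub_zero, zero_add, add_zero, zero_sub, neg_zero]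

private lemma aux_sinh_im (z : ℂ) : (Complex.sinh z).im = Real.cosh z.re * Real.sin z.im := by
  rw [aux_sinh_apply z]; simp only [Complex.add_re, Complex.add_im, Complex.ofReal_re, Complex.ofReal_im, Complex.mul_re, Complex.mul_im, Complex.I_re, Complex.I_im, mul_zero, mul_one, zero_mul, sub_zero, zero_add, add_zero, zero_sub, neg_zero]

private lemma aux_cosh_re (z : ℂ) : (Complex.cosh z).re = Real.cosh z.re * Real.cos z.im := by
  rw [aux_cosh_apply z]; simp only [Complex.add_re, Complex.add_im, Complex.ofReal_re, Complex.ofReal_im, Complex.mul_re, Complex.mul_im, Complex.I_re, Complex.I_im, mul_zero, mul_one, zero_mul, sub_zero, zero_add, add_zero, zero_sub, neg_zero]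

private lemma aux_cosh_im (z : ℂ) : (Complex.cosh z).im = Real.sinh z.re * Real.sin z.im := by
  rw [aux_cosh_apply z]; simp only [Complex.add_re, Complex.add_im, Complex.ofReal_re, Complex.ofReal_im, Complex.mul_re, Complex.mul_im, Complex.I_re, Complex.I_im, mul_zero, mul_one, zero_mul, sub_zero, zero_add, add_zero, zero_sub, neg_zero]

private lemma aux_normSq_cosh_pos (z : ℂ) (hz : 0 < z.re) :
    0 < Complex.normSq (Complex.cosh z) := by
  have h1 : (Complex.cosh z).re = Real.cosh z.re * Real.cos z.im := aux_cosh_re z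
  have h2 : (Complex.cosh z).im = Real.sinh z.re * Real.sin z.im := aux_cosh_im z
  rw [Complex.normSq_apply, h1, h2]
  have hs : 0 < Real.sinh z.re := Real.sinh_pos_iff.2 hz
  have hpy : Real.sin z.im ^ 2 + Real.cos z.im ^ 2 = 1 := Real.sin_sq_add_cos_sq z.im
  have hcsq : Real.cosh z.re ^ 2 = Real.sinh z.re ^ 2 + 1 := Real.cosh_sq z.re
  nlinarith [sq_nonneg (Real.cos z.im), sq_nonneg (Real.sin z.im), mul_pos hs hs]

private lemma aux_cosh_ne_zero (z : ℂ) (hz : 0 < z.re) : Complex.cosh z ≠ 0 :=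
  Complex.normSq_pos.1 (aux_normSq_cosh_pos z hz)

private lemma aux_tanh_re_pos (z : ℂ) (hz : 0 < z.re) :
    0 < (Complex.sinh z / Complex.cosh z).re := by
  have hn : 0 < Complex.normSq (Complex.cosh z) := aux_normSq_cosh_pos z hz
  rw [Complex.div_re, aux_sinh_re, aux_sinh_im, aux_cosh_re, aux_cosh_im, ← add_div]
  apply div_pos _ hn
  have hs : 0 < Real.sinh z.re := Real.sinh_pos_iff.2 hz
  have hc : 0 < Real.cosh z.re := Real.cosh_pos _
  have hpy : Real.sin z.im ^ 2 + Real.cos z.im ^ 2 = 1 := Real.sin_sq_add_cos_sq z.im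
  nlinarith [mul_pos hs hc]

/-- If `T` and `U` lie in the open right half-plane, their product is not `-ρ` for `ρ ≥ 0`. -/
private lemma aux_prod_ne (T U : ℂ) (hT : 0 < T.re) (hU : 0 < U.re) (ρ : ℝ) (hρ : 0 ≤ ρ) :
    T * U ≠ -(ρ : ℂ) := by
  intro h
  have hT0 : T ≠ 0 := fun h0 => by simp [h0] at hT
  have hU' : U = -(ρ : ℂ) / T := by
    field_simp
    linear_combination h
  have hinv : 0 < (T⁻¹).re := by
    rw [Complex.inv_re]
    exact div_pos hT (Complex.normSq_pos.2 hT0)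
  have : U.re = -ρ * (T⁻¹).re := by
    rw [hU', div_eq_mul_inv]
    rw [show -(ρ:ℂ) = ((-ρ : ℝ) : ℂ) by push_cast; ring, Complex.re_ofReal_mul]
  nlinarith

/-- A factor `(c-θ)·Q·S + e·P·R` is nonzero when `Q/P`, `S/R` are in the right half-plane. -/
private lemma aux_factor_ne (cθ e : ℝ) (hcθ : 0 < cθ) (he : 0 < e) (P Q R S : ℂ)
    (hP : P ≠ 0) (hR : R ≠ 0) (hT : 0 < (Q / P).re) (hU : 0 < (S / R).re) :
    (cθ : ℂ) * Q * S + (e : ℂ) * (P * R) ≠ 0 := by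
  intro h
  have hcθ' : (cθ : ℂ) ≠ 0 := by exact_mod_cast hcθ.ne'
  have hTU : (Q / P) * (S / R) = -(((e / cθ : ℝ)) : ℂ) := by
    push_cast
    field_simp
    linear_combination h
  exact aux_prod_ne _ _ hT hU (e / cθ) (le_of_lt (div_pos he hcθ)) hTU

/-- Nonvanishing of the two-spin function `(1+θ)² Φ_κ(x,y)` with `θ = √(cosh κ)`
on the product of open right half-planes. -/
theorem stmt_12 (κ : ℝ) (hκ : 0 < κ) (θ : ℝ) (hθ : θ = Real.sqrt (Real.cosh κ))
    (x y : ℂ) (hx : 0 < x.re) (hy : 0 < y.re) :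
    ((θ : ℂ) + Complex.cosh x) * ((θ : ℂ) + Complex.cosh y) +
      (Complex.cosh (κ : ℂ) - 1) * Complex.cosh x * Complex.cosh y +
      Complex.sinh (κ : ℂ) * Complex.sinh x * Complex.sinh y ≠ 0 := by
  set c : ℝ := Real.cosh κ with hc
  set s : ℝ := Real.sinh κ with hs
  set d : ℝ := Real.sqrt (c - 1) with hd
  have hc1 : 1 < c := by
    rw [hc]
    exact Real.one_lt_cosh.2 hκ.ne'
  have hθ2 : θ ^ 2 = c := by rw [hθ]; exact Real.sq_sqrt (by linarith)
  have hθ0 : 0 ≤ θ := hθ ▸ Real.sqrt_nonneg _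
  have hθ1 : 1 < θ := by nlinarith
  have hθc : θ < c := by nlinarith
  have hs0 : 0 < s := Real.sinh_pos_iff.2 hκ
  have hs2 : s ^ 2 = c ^ 2 - 1 := by rw [hs, hc]; exact Real.sinh_sq κ
  have hd2 : d ^ 2 = c - 1 := by rw [hd]; exact Real.sq_sqrt (by linarith)
  have hd0 : 0 ≤ d := hd ▸ Real.sqrt_nonneg _
  have hds : d < s := by nlinarith
  -- half-angle quantities
  set P : ℂ := Complex.cosh (x / 2) with hP
  set Q : ℂ := Complex.sinh (x / 2) with hQ
  set R : ℂ := Complex.cosh (y / 2) with hR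
  set S : ℂ := Complex.sinh (y / 2) with hS
  have hxre : 0 < (x / 2).re := by
    have : (x / 2).re = x.re / 2 := by
      rw [show x / 2 = ((2⁻¹ : ℝ) : ℂ) * x by push_cast; ring, Complex.re_ofReal_mul]
      ring
    rw [this]; linarith
  have hyre : 0 < (y / 2).re := by
    have : (y / 2).re = y.re / 2 := by
      rw [show y / 2 = ((2⁻¹ : ℝ) : ℂ) * y by push_cast; ring, Complex.re_ofReal_mul]
      ring
    rw [this]; linarith
  have hPne : P ≠ 0 := aux_cosh_ne_zero _ hxre
  have hRne : R ≠ 0 := aux_cosh_ne_zero _ hyre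
  have hTre : 0 < (Q / P).re := aux_tanh_re_pos _ hxre
  have hUre : 0 < (S / R).re := aux_tanh_re_pos _ hyre
  have h1 : P ^ 2 - Q ^ 2 = 1 := Complex.cosh_sq_sub_sinh_sq (x / 2)
  have h2 : R ^ 2 - S ^ 2 = 1 := Complex.cosh_sq_sub_sinh_sq (y / 2)
  have hcx : Complex.cosh x = 2 * P ^ 2 - 1 := by
    have h := Complex.cosh_two_mul (x / 2)
    rw [show (2 : ℂ) * (x / 2) = x by ring] at h
    linear_combination h - h1
  have hcy : Complex.cosh y = 2 * R ^ 2 - 1 := by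
    have h := Complex.cosh_two_mul (y / 2)
    rw [show (2 : ℂ) * (y / 2) = y by ring] at h
    linear_combination h - h2
  have hsx : Complex.sinh x = 2 * Q * P := by
    have h := Complex.sinh_two_mul (x / 2)
    rw [show (2 : ℂ) * (x / 2) = x by ring] at h
    exact h
  have hsy : Complex.sinh y = 2 * S * R := by
    have h := Complex.sinh_two_mul (y / 2)
    rw [show (2 : ℂ) * (y / 2) = y by ring] at h
    exact h
  have hCκ : Complex.cosh (κ : ℂ) = (c : ℂ) := by rw [hc]; exact_mod_cast (Complex.ofReal_cosh κ).symm
  have hSκ : Complex.sinh (κ : ℂ) = (s : ℂ) := by rw [hs]; exact_mod_cast (Complex.ofReal_sinh κ).symm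
  have h3 : (θ : ℂ) ^ 2 = (c : ℂ) := by exact_mod_cast congrArg (Complex.ofReal) hθ2
  have h4 : (s : ℂ) ^ 2 = (c : ℂ) ^ 2 - 1 := by exact_mod_cast congrArg (Complex.ofReal) hs2
  have h5 : (d : ℂ) ^ 2 = (c : ℂ) - 1 := by exact_mod_cast congrArg (Complex.ofReal) hd2
  -- key algebraic identity
  have key : ((c : ℂ) - θ) *
      (((θ : ℂ) + Complex.cosh x) * ((θ : ℂ) + Complex.cosh y) +
        (Complex.cosh (κ : ℂ) - 1) * Complex.cosh x * Complex.cosh y +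
        Complex.sinh (κ : ℂ) * Complex.sinh x * Complex.sinh y) =
      2 * ((((c - θ : ℝ)) : ℂ) * Q * S + (((s - d : ℝ)) : ℂ) * (P * R)) *
        ((((c - θ : ℝ)) : ℂ) * Q * S + (((s + d : ℝ)) : ℂ) * (P * R)) := by
    rw [hCκ, hSκ, hcx, hcy, hsx, hsy]
    push_cast
    linear_combination ((c : ℂ) - θ - 2 * P ^ 2 * R ^ 2) * h3 +
      2 * ((c : ℂ) - θ) ^ 2 * Q ^ 2 * h2 + 2 * ((c : ℂ) - θ) ^ 2 * (R ^ 2 - 1) * h1 -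
      2 * P ^ 2 * R ^ 2 * h4 + 2 * P ^ 2 * R ^ 2 * h5
  have hF1 : (((c - θ : ℝ)) : ℂ) * Q * S + (((s - d : ℝ)) : ℂ) * (P * R) ≠ 0 :=
    aux_factor_ne (c - θ) (s - d) (by linarith) (by linarith) P Q R S hPne hRne hTre hUre
  have hF2 : (((c - θ : ℝ)) : ℂ) * Q * S + (((s + d : ℝ)) : ℂ) * (P * R) ≠ 0 :=
    aux_factor_ne (c - θ) (s + d) (by linarith) (by linarith) P Q R S hPne hRne hTre hUre
  intro hzero
  rw [hzero, mul_zero] at key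
  have : ((c : ℝ) - θ : ℝ) ≠ 0 := by linarith
  have h2ne : (2 : ℂ) ≠ 0 := by norm_num
  rcases mul_eq_zero.1 key.symm with h | h
  · rcases mul_eq_zero.1 h with h' | h'
    · exact h2ne h'
    · exact hF1 h'
  · exact hF2 h
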